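/- Let T be an ℕ-graded ring with grading 𝒜 : ℕ → AddSubgroup T, and let A be a right ideal of T whose right annihilator A^r = { t ∈ T | ∀ a ∈ A, a * t = 0 } contains a non-zero element. Then A^r contains a non-zero homogeneous element, i.e. there exist j ∈ ℕ and a non-zero h ∈ 𝒜 j with a * h = 0 for all a ∈ A. -/

import Mathlib

/-- Let `T` be an `ℕ`-graded ring and `A` a right ideal of `T` whose right annihilator
contains a non-zero element.  Then the right annihilator of `A` contains a non-zero
homogeneous element. -/
theorem exists_homogeneous_annihilator_of_nGraded
    {T : Type*} [Ring T] (𝒜 : ℕ → AddSubgroup T) [GradedRing 𝒜]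
    (A : AddSubgroup T) (hA : ∀ a ∈ A, ∀ t : T, a * t ∈ A)
    (hann : ∃ t : T, t ≠ 0 ∧ ∀ a ∈ A, a * t = 0) :
    ∃ (j : ℕ) (h : T), h ∈ 𝒜 j ∧ h ≠ 0 ∧ ∀ a ∈ A, a * h = 0 := by
  classical
  have hPex : ∃ n, ∃ t : T, t ≠ 0 ∧ (∀ a ∈ A, a * t = 0) ∧
      (DirectSum.decompose 𝒜 t).support.card = n := by
    obtain ⟨t, ht0, htann⟩ := hann
    exact ⟨_, t, ht0, htann, rfl⟩
  obtain ⟨t, ht0, htann, htcard⟩ := Nat.find_spec hPex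
  have hmin : ∀ s : T, s ≠ 0 → (∀ a ∈ A, a * s = 0) →
      Nat.find hPex ≤ (DirectSum.decompose 𝒜 s).support.card := by
    intro s hs0 hsann
    exact Nat.find_min' hPex ⟨s, hs0, hsann, rfl⟩
  have hts : (DirectSum.decompose 𝒜 t).support.Nonempty := by
    rw [Finset.nonempty_iff_ne_empty, Ne, DFinsupp.support_eq_empty]
    intro h
    exact ht0 (by simpa using congrArg (DirectSum.decomposeAddEquiv 𝒜).symm h)
  set d : ℕ := (DirectSum.decompose 𝒜 t).support.max' hts with hd
  have hdmem : d ∈ (DirectSum.decompose 𝒜 t).support := Finset.max'_mem _ _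
  set tk : T := (DirectSum.decompose 𝒜 t d : T) with htk
  have htk0 : tk ≠ 0 := by
    rw [htk, Ne, ZeroMemClass.coe_eq_zero]
    exact DFinsupp.mem_support_iff.mp hdmem
  -- main claim
  have main : ∀ m : ℕ, ∀ a : T, (DirectSum.decompose 𝒜 a).support.card = m →
      a * t = 0 → a * tk = 0 := by
    intro m
    induction m using Nat.strong_induction_on with
    | _ m ih =>
      intro a hcard hat
      by_cases ha0 : a = 0
      · simp [ha0]
      have has : (DirectSum.decompose 𝒜 a).support.Nonempty := by
        rw [Finset.nonempty_iff_ne_empty, Ne, DFinsupp.support_eq_empty]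
        intro h
        exact ha0 (by simpa using congrArg (DirectSum.decomposeAddEquiv 𝒜).symm h)
      set e : ℕ := (DirectSum.decompose 𝒜 a).support.max' has with he
      have hemem : e ∈ (DirectSum.decompose 𝒜 a).support := Finset.max'_mem _ _
      set am : T := (DirectSum.decompose 𝒜 a e : T) with ham
      have hammem : am ∈ 𝒜 e := SetLike.coe_mem _
      -- step 1 : am * tk = 0
      have step1 : am * tk = 0 := by
        have h1 : (DirectSum.decompose 𝒜 (a * t) (e + d) : T) = am * tk := by
          rw [DirectSum.decompose_mul, DirectSum.coe_mul_apply]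
          refine Finset.sum_eq_single_of_mem (e, d)
            (Finset.mem_filter.mpr ⟨Finset.mem_product.mpr ⟨hemem, hdmem⟩, rfl⟩) ?_
          rintro ⟨i, j⟩ hij hne
          simp only [Finset.mem_filter, Finset.mem_product] at hij
          obtain ⟨⟨hi, hj⟩, hsum⟩ := hij
          have hie : i ≤ e := Finset.le_max' _ _ hi
          have hjd : j ≤ d := Finset.le_max' _ _ hj
          exact absurd (by constructor <;> omega : i = e ∧ j = d)
            (by simpa [Prod.ext_iff] using hne)
        rw [hat] at h1
        simpa using h1.symm
      -- step 2 : am * t = 0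
      have step2 : am * t = 0 := by
        by_contra hne
        have hannA : ∀ b ∈ A, b * (am * t) = 0 := fun b hb => by
          rw [← mul_assoc]; exact htann _ (hA b hb am)
        have hle := hmin _ hne hannA
        have hsub : (DirectSum.decompose 𝒜 (am * t)).support ⊆
            ((DirectSum.decompose 𝒜 t).support.erase d).image (e + ·) := by
          intro n hn
          have hn' : DirectSum.decompose 𝒜 (am * t) n ≠ 0 := DFinsupp.mem_support_iff.mp hn
          by_cases hen : e ≤ n
          · have hdec : (DirectSum.decompose 𝒜 (am * t) n : T)
                = am * (DirectSum.decompose 𝒜 t (n - e) : T) :=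
              DirectSum.coe_decompose_mul_of_left_mem_of_le 𝒜 hammem hen
            have hnz : (DirectSum.decompose 𝒜 t (n - e) : T) ≠ 0 := by
              intro h0
              apply hn'
              apply ZeroMemClass.coe_eq_zero.mp
              rw [hdec, h0, mul_zero]
            have hnd : n - e ≠ d := by
              intro h
              rw [h, ← htk] at hdec
              rw [step1] at hdec
              exact hn' (ZeroMemClass.coe_eq_zero.mp hdec)
            refine Finset.mem_image.mpr ⟨n - e, ?_, by omega⟩
            refine Finset.mem_erase.mpr ⟨hnd, DFinsupp.mem_support_iff.mpr ?_⟩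
            rwa [Ne, ← ZeroMemClass.coe_eq_zero]
          · have h0 : (DirectSum.decompose 𝒜 (am * t) n : T) = 0 :=
              DirectSum.coe_decompose_mul_of_left_mem_of_not_le 𝒜 hammem hen
            exact absurd (ZeroMemClass.coe_eq_zero.mp h0) hn'
        have hcard2 := Finset.card_le_card hsub
        have him := Finset.card_image_le (s := (DirectSum.decompose 𝒜 t).support.erase d)
          (f := (e + ·))
        have herase : ((DirectSum.decompose 𝒜 t).support.erase d).card
            = Nat.find hPex - 1 := by rw [Finset.card_erase_of_mem hdmem, htcard]
        have hk1 : 1 ≤ Nat.find hPex := by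
          rw [← htcard]
          exact Finset.card_pos.mpr hts
        omega
      -- step 3
      have ha' : (a - am) * t = 0 := by
        rw [sub_mul, hat, step2, sub_zero]
      have hdam : DirectSum.decompose 𝒜 am
          = DirectSum.of (fun i => (𝒜 i : AddSubgroup T)) e ⟨am, hammem⟩ :=
        DirectSum.decompose_coe 𝒜 (⟨am, hammem⟩ : 𝒜 e)
      have hsupp' : (DirectSum.decompose 𝒜 (a - am)).support
          = (DirectSum.decompose 𝒜 a).support.erase e := by
        ext n
        have hdec : DirectSum.decompose 𝒜 (a - am) n
            = DirectSum.decompose 𝒜 a n - DirectSum.decompose 𝒜 am n := by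
          rw [DirectSum.decompose_sub]; rfl
        by_cases hne : n = e
        · subst hne
          simp only [Finset.mem_erase, ne_eq, not_true_eq_false, false_and, iff_false,
            DFinsupp.mem_support_iff, not_not, hdec, hdam, DirectSum.of_eq_same]
          exact sub_eq_zero.mpr (Subtype.ext rfl)
        · simp only [Finset.mem_erase, ne_eq, hne, not_false_eq_true, true_and,
            DFinsupp.mem_support_iff, hdec, hdam,
            DirectSum.of_eq_of_ne _ _ _ hne, sub_zero]
      have hlt : (DirectSum.decompose 𝒜 (a - am)).support.card < m := by
        rw [hsupp', Finset.card_erase_of_mem hemem, hcard]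
        have : 0 < m := hcard ▸ Finset.card_pos.mpr has
        omega
      have h3 := ih _ hlt (a - am) rfl ha'
      have h4 : a * tk = (a - am) * tk + am * tk := by noncomm_ring
      rw [h4, h3, step1, add_zero]
  exact ⟨d, tk, SetLike.coe_mem _, htk0, fun a ha => main _ a rfl (htann a ha)⟩
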